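/- arXiv:1602.07531 — 2 statements merged into one kernel-verified Lean document; each statement's English description precedes it below -/
import Mathlib

section
/- Let C = conv({±q¹, …, ±qᵐ}) ⊆ ℝⁿ be a 0-symmetric polytope with nonempty interior, let K ⊆ ℝⁿ be a convex body that is complete and reduced with respect to C, and let c¹, …, cᵐ ∈ ℝⁿ be such that K = conv(⋃_{i=1}^{m} (cⁱ + (w(K,C)/2)•[−qⁱ, qⁱ])) and each segment cⁱ + (w(K,C)/2)•[−qⁱ, qⁱ] attains the width of K (i.e., for each i there is s ≠ 0 with b_s(cⁱ + (w(K,C)/2)•[−qⁱ, qⁱ], C) = b_s(K,C) = w(K,C)). If for some i ∈ {1,…,m} the point cⁱ + (w(K,C)/2)qⁱ is an extreme point of K and the point cⁱ − (w(K,C)/2)qⁱ belongs to the relative interior of a facet of K, then K is of constant width with respect to C. -/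
open Pointwise

/-- Euclidean n-space. -/
abbrev Euc (n : ℕ) : Type := EuclideanSpace ℝ (Fin n)

/-- A convex body: a nonempty compact convex subset of ℝⁿ. -/
def IsBody {n : ℕ} (K : Set (Euc n)) : Prop := Convex ℝ K ∧ IsCompact K ∧ K.Nonempty

/-- Support function `h(K,u) = sup_{x ∈ K} ⟨u,x⟩`. -/
noncomputable def suppF {n : ℕ} (K : Set (Euc n)) (u : Euc n) : ℝ :=
  sSup ((fun x => (inner ℝ u x : ℝ)) '' K)

/-- The s-breadth `b_s(K,C) = 2 h(K-K,s) / h(C-C,s)` (here `K - K` is the pointwise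
(Minkowski) difference body). -/
noncomputable def breadthF {n : ℕ} (K C : Set (Euc n)) (s : Euc n) : ℝ :=
  2 * suppF (K - K) s / suppF (C - C) s

/-- The diameter `D(K,C) = sup_{s ≠ 0} b_s(K,C)`. -/
noncomputable def diamF {n : ℕ} (K C : Set (Euc n)) : ℝ :=
  sSup {d : ℝ | ∃ s : Euc n, s ≠ 0 ∧ d = breadthF K C s}

/-- The minimal width `w(K,C) = inf_{s ≠ 0} b_s(K,C)`. -/
noncomputable def widthF {n : ℕ} (K C : Set (Euc n)) : ℝ :=
  sInf {d : ℝ | ∃ s : Euc n, s ≠ 0 ∧ d = breadthF K C s}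

/-- The circumradius `R(K,C) = inf {λ ≥ 0 : ∃ c, K ⊆ c + λ•C}`. -/
noncomputable def circumF {n : ℕ} (K C : Set (Euc n)) : ℝ :=
  sInf {l : ℝ | 0 ≤ l ∧ ∃ c : Euc n, K ⊆ c +ᵥ l • C}

/-- The inradius `r(K,C) = sup {λ ≥ 0 : ∃ c, c + λ•C ⊆ K}`. -/
noncomputable def inradF {n : ℕ} (K C : Set (Euc n)) : ℝ :=
  sSup {l : ℝ | 0 ≤ l ∧ ∃ c : Euc n, c +ᵥ l • C ⊆ K}

/-- `K` is (diametrically) complete with respect to `C`. -/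
def CompleteWrt {n : ℕ} (K C : Set (Euc n)) : Prop :=
  ∀ K' : Set (Euc n), IsBody K' → K ⊂ K' → diamF K C < diamF K' C

/-- `K` is reduced with respect to `C`. -/
def ReducedWrt {n : ℕ} (K C : Set (Euc n)) : Prop :=
  ∀ K' : Set (Euc n), IsBody K' → K' ⊂ K → widthF K' C < widthF K C

/-- `K` is of constant width with respect to `C`. -/
def ConstWidthWrt {n : ℕ} (K C : Set (Euc n)) : Prop := widthF K C = diamF K C

/-- `C` is perfect: every complete body is of constant width. -/
def PerfectBody {n : ℕ} (C : Set (Euc n)) : Prop :=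
  ∀ K : Set (Euc n), IsBody K → CompleteWrt K C → ConstWidthWrt K C

/-- A polytope: the convex hull of finitely many points. -/
def IsPolytope {n : ℕ} (P : Set (Euc n)) : Prop :=
  ∃ V : Finset (Euc n), P = convexHull ℝ (V : Set (Euc n))

/-- An n-simplex: the convex hull of n+1 affinely independent points. -/
def IsSimplex {n : ℕ} (S : Set (Euc n)) : Prop :=
  ∃ p : Fin (n + 1) → Euc n, AffineIndependent ℝ p ∧ S = convexHull ℝ (Set.range p)

/-- The Minkowski asymmetry `s(K) = R(-K,K)`. -/
noncomputable def minkAsym {n : ℕ} (K : Set (Euc n)) : ℝ := circumF (-K) K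

/-- `K` is Minkowski-centered: `-K ⊆ s(K) • K`. -/
def MinkCentered {n : ℕ} (K : Set (Euc n)) : Prop := -K ⊆ minkAsym K • K

/-- Optimal containment `A ⊆^opt B`. -/
def SubsetOpt {n : ℕ} (A B : Set (Euc n)) : Prop :=
  A ⊆ B ∧ ∀ ρ : ℝ, ρ < 1 → ∀ c : Euc n, ¬ (A ⊆ c +ᵥ ρ • B)

/-- The face of `P` with outer normal `a`. -/
noncomputable def faceOf {n : ℕ} (P : Set (Euc n)) (a : Euc n) : Set (Euc n) :=
  {x ∈ P | (inner ℝ a x : ℝ) = suppF P a}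

/-- `F` is a facet (an (n-1)-dimensional face) of `P`. -/
def IsFacetOf {n : ℕ} (P F : Set (Euc n)) : Prop :=
  ∃ a : Euc n, a ≠ 0 ∧ F = faceOf P a ∧ Module.finrank ℝ (vectorSpan ℝ F) = n - 1

/-- `Kstar` is a completion of `K` with respect to `C`. -/
def IsCompletionOf {n : ℕ} (Kstar K C : Set (Euc n)) : Prop :=
  IsBody Kstar ∧ K ⊆ Kstar ∧ diamF Kstar C = diamF K C ∧ CompleteWrt Kstar C

section aux
variable {n : ℕ}

lemma inner_isLinearMap (u : Euc n) : IsLinearMap ℝ (fun x : Euc n => (inner ℝ u x : ℝ)) :=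
  ⟨fun x y => inner_add_right u x y, fun c x => real_inner_smul_right u x c⟩

lemma suppF_isGreatest {K : Set (Euc n)} (hc : IsCompact K) (hne : K.Nonempty) (u : Euc n) :
    IsGreatest ((fun x => (inner ℝ u x : ℝ)) '' K) (suppF K u) := by
  obtain ⟨x, hxK, hmax⟩ := hc.exists_isMaxOn hne
    ((continuous_const.inner continuous_id).continuousOn :
      ContinuousOn (fun x : Euc n => (inner ℝ u x : ℝ)) K)
  have hg : IsGreatest ((fun x => (inner ℝ u x : ℝ)) '' K) (inner ℝ u x : ℝ) :=
    ⟨⟨x, hxK, rfl⟩, by rintro _ ⟨z, hz, rfl⟩; exact hmax hz⟩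
  rwa [suppF, hg.csSup_eq]

lemma suppF_hull {S : Set (Euc n)} {u : Euc n} {α : ℝ}
    (h : IsGreatest ((fun x => (inner ℝ u x : ℝ)) '' S) α) :
    suppF (convexHull ℝ S) u = α := by
  have hg : IsGreatest ((fun x => (inner ℝ u x : ℝ)) '' (convexHull ℝ S)) α := by
    constructor
    · obtain ⟨x, hx, hxe⟩ := h.1
      exact ⟨x, subset_convexHull ℝ S hx, hxe⟩
    · rintro _ ⟨z, hz, rfl⟩
      have : convexHull ℝ S ⊆ {x | (inner ℝ u x : ℝ) ≤ α} :=
        convexHull_min (fun x hx => h.2 ⟨x, hx, rfl⟩) (convex_halfSpace_le (inner_isLinearMap u) α)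
      exact this hz
  rw [suppF, hg.csSup_eq]

lemma suppF_sub_eq' {A B : Set (Euc n)} {s : Euc n} {α β : ℝ}
    (hA : IsGreatest ((fun x => (inner ℝ s x : ℝ)) '' A) α)
    (hB : IsGreatest ((fun x => (inner ℝ (-s) x : ℝ)) '' B) β) :
    suppF (A - B) s = α + β := by
  have hg : IsGreatest ((fun x => (inner ℝ s x : ℝ)) '' (A - B)) (α + β) := by
    constructor
    · obtain ⟨a, ha, hae⟩ := hA.1
      obtain ⟨b, hb, hbe⟩ := hB.1
      refine ⟨a - b, Set.sub_mem_sub ha hb, ?_⟩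
      simp only [inner_sub_right]
      simp only [inner_neg_left] at hbe
      linarith
    · rintro _ ⟨z, hz, rfl⟩
      rw [Set.mem_sub] at hz
      obtain ⟨a, ha, b, hb, rfl⟩ := hz
      have h1 : (inner ℝ s a : ℝ) ≤ α := hA.2 ⟨a, ha, rfl⟩
      have h2 : (inner ℝ (-s) b : ℝ) ≤ β := hB.2 ⟨b, hb, rfl⟩
      simp only [inner_neg_left] at h2
      simp only [inner_sub_right]
      linarith
  rw [suppF, hg.csSup_eq]

lemma suppF_sub_compact {A : Set (Euc n)} (hA : IsCompact A) (hAne : A.Nonempty) (s : Euc n) :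
    suppF (A - A) s = suppF A s + suppF A (-s) :=
  suppF_sub_eq' (suppF_isGreatest hA hAne s) (suppF_isGreatest hA hAne (-s))

lemma suppF_mem_le {K : Set (Euc n)} (hc : IsCompact K) (hne : K.Nonempty) {u x : Euc n}
    (hx : x ∈ K) : (inner ℝ u x : ℝ) ≤ suppF K u :=
  (suppF_isGreatest hc hne u).2 ⟨x, hx, rfl⟩

lemma suppF_le_of_forall {K : Set (Euc n)} (hc : IsCompact K) (hne : K.Nonempty) {u : Euc n}
    {cst : ℝ} (h : ∀ x ∈ K, (inner ℝ u x : ℝ) ≤ cst) : suppF K u ≤ cst := by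
  obtain ⟨⟨x, hx, hxe⟩, -⟩ := suppF_isGreatest hc hne u
  rw [← hxe]; exact h x hx

lemma suppF_neg_symm {C : Set (Euc n)} (hsym : C = -C) (s : Euc n) :
    suppF C (-s) = suppF C s := by
  unfold suppF
  congr 1
  ext r
  constructor
  · rintro ⟨x, hx, rfl⟩
    refine ⟨-x, ?_, ?_⟩
    · rw [hsym]; exact Set.neg_mem_neg.2 hx
    · simp only [inner_neg_right, inner_neg_left]
  · rintro ⟨x, hx, rfl⟩
    refine ⟨-x, ?_, ?_⟩
    · rw [hsym]; exact Set.neg_mem_neg.2 hx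
    · simp only [inner_neg_right, inner_neg_left, neg_neg]

lemma suppF_smul_nonneg {K : Set (Euc n)} (hc : IsCompact K) (hne : K.Nonempty) {c : ℝ}
    (hc0 : 0 ≤ c) (s : Euc n) : suppF K (c • s) = c * suppF K s := by
  obtain ⟨⟨x, hx, hxe⟩, hub⟩ := suppF_isGreatest hc hne s
  have hg : IsGreatest ((fun x => (inner ℝ (c • s) x : ℝ)) '' K) (c * suppF K s) := by
    constructor
    · exact ⟨x, hx, by simp only [real_inner_smul_left]; rw [← hxe]⟩
    · rintro _ ⟨z, hz, rfl⟩
      simp only [real_inner_smul_left]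
      exact mul_le_mul_of_nonneg_left (hub ⟨z, hz, rfl⟩) hc0
  rw [suppF, hg.csSup_eq]


lemma isGreatest_image_union {A B : Set (Euc n)} {f : Euc n → ℝ} {α β : ℝ}
    (hA : IsGreatest (f '' A) α) (hB : IsGreatest (f '' B) β) :
    IsGreatest (f '' (A ∪ B)) (max α β) := by
  constructor
  · rcases le_total α β with h | h
    · obtain ⟨b, hb, hbe⟩ := hB.1
      exact ⟨b, Or.inr hb, by rw [hbe, max_eq_right h]⟩
    · obtain ⟨a, ha, hae⟩ := hA.1
      exact ⟨a, Or.inl ha, by rw [hae, max_eq_left h]⟩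
  · rintro _ ⟨z, hz | hz, rfl⟩
    · exact le_max_of_le_left (hA.2 ⟨z, hz, rfl⟩)
    · exact le_max_of_le_right (hB.2 ⟨z, hz, rfl⟩)

lemma isGreatest_image_singleton (f : Euc n → ℝ) (y : Euc n) :
    IsGreatest (f '' {y}) (f y) := by
  constructor
  · exact ⟨y, rfl, rfl⟩
  · rintro _ ⟨z, hz, rfl⟩; rw [Set.mem_singleton_iff] at hz; rw [hz]

lemma isGreatest_segBody (cc q s : Euc n) {t : ℝ} (ht : 0 ≤ t) :
    IsGreatest ((fun x => (inner ℝ s x : ℝ)) '' (cc +ᵥ t • segment ℝ (-q) q))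
      ((inner ℝ s cc : ℝ) + t * |(inner ℝ s q : ℝ)|) := by
  constructor
  · rcases le_total 0 (inner ℝ s q : ℝ) with h | h
    · refine ⟨cc + t • q, ?_, ?_⟩
      · exact ⟨t • q, Set.smul_mem_smul_set (right_mem_segment ℝ (-q) q), by
          simp [vadd_eq_add]⟩
      · simp only [inner_add_right, real_inner_smul_right]
        rw [abs_of_nonneg h]
    · refine ⟨cc + t • (-q), ?_, ?_⟩
      · exact ⟨t • (-q), Set.smul_mem_smul_set (left_mem_segment ℝ (-q) q), by
          simp [vadd_eq_add]⟩
      · simp only [inner_add_right, real_inner_smul_right, inner_neg_right]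
        rw [abs_of_nonpos h]
  · rintro _ ⟨z, hz, rfl⟩
    obtain ⟨y, hy, rfl⟩ := hz
    obtain ⟨v, hv, rfl⟩ := hy
    obtain ⟨a, b, ha, hb, hab, rfl⟩ := hv
    simp only [vadd_eq_add, inner_add_right, real_inner_smul_right, inner_smul_right,
      inner_neg_right]
    have h1 : (b - a) * (inner ℝ s q : ℝ) ≤ |(inner ℝ s q : ℝ)| := by
      have hba : |b - a| ≤ 1 := by rw [abs_le]; constructor <;> linarith
      calc (b - a) * (inner ℝ s q : ℝ) ≤ |(b - a) * (inner ℝ s q : ℝ)| := le_abs_self _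
        _ = |b - a| * |(inner ℝ s q : ℝ)| := abs_mul _ _
        _ ≤ 1 * |(inner ℝ s q : ℝ)| := by
            exact mul_le_mul_of_nonneg_right hba (abs_nonneg _)
        _ = |(inner ℝ s q : ℝ)| := one_mul _
    have key : t * (a * -(inner ℝ s q : ℝ) + b * (inner ℝ s q : ℝ)) ≤ t * |(inner ℝ s q : ℝ)| := by
      have heq : a * -(inner ℝ s q : ℝ) + b * (inner ℝ s q : ℝ) = (b - a) * (inner ℝ s q : ℝ) := by
        ring
      rw [heq]
      exact mul_le_mul_of_nonneg_left h1 ht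
    linarith

lemma segBody_isCompact (cc q : Euc n) (t : ℝ) :
    IsCompact (cc +ᵥ t • segment ℝ (-q) q) := by
  have h1 : IsCompact (segment ℝ (-q) q) := by
    rw [segment_eq_image ℝ (-q) q]
    exact (isCompact_Icc).image (by continuity)
  have h2 : IsCompact (t • segment ℝ (-q) q) := h1.smul t
  exact h2.vadd cc

lemma segBody_nonempty (cc q : Euc n) (t : ℝ) :
    (cc +ᵥ t • segment ℝ (-q) q).Nonempty :=
  ⟨cc +ᵥ t • q, Set.vadd_mem_vadd_set (Set.smul_mem_smul_set (right_mem_segment ℝ (-q) q))⟩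


lemma breadthF_eq {K C : Set (Euc n)} (hKc : IsCompact K) (hKne : K.Nonempty)
    (hCc : IsCompact C) (hCne : C.Nonempty) (hsym : C = -C) (s : Euc n) :
    breadthF K C s = (suppF K s + suppF K (-s)) / suppF C s := by
  rw [breadthF, suppF_sub_compact hKc hKne, suppF_sub_compact hCc hCne,
    suppF_neg_symm hsym, ← two_mul, mul_div_mul_left _ _ (two_ne_zero)]

lemma intrinsicInterior_extend {F : Set (Euc n)} {x z : Euc n}
    (hx : x ∈ intrinsicInterior ℝ F) (hz : z ∈ F) :
    ∃ δ : ℝ, 0 < δ ∧ x + δ • (x - z) ∈ F := by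
  obtain ⟨y, hy, hyx⟩ := mem_intrinsicInterior.1 hx
  have hxF : x ∈ F := intrinsicInterior_subset hx
  have hxA : x ∈ affineSpan ℝ F := subset_affineSpan ℝ F hxF
  have hzA : z ∈ affineSpan ℝ F := subset_affineSpan ℝ F hz
  have hmem : ∀ t : ℝ, x + t • (x - z) ∈ affineSpan ℝ F := by
    intro t
    have := AffineSubspace.smul_vsub_vadd_mem (affineSpan ℝ F) t hxA hzA hxA
    simpa [vsub_eq_sub, vadd_eq_add, add_comm] using this
  set γ : ℝ → affineSpan ℝ F := fun t => ⟨x + t • (x - z), hmem t⟩ with hγ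
  have hcont : Continuous γ := by
    apply Continuous.subtype_mk
    continuity
  have hγ0 : γ 0 = y := by
    apply Subtype.ext
    simp [hγ, hyx]
  have hopen : IsOpen (γ ⁻¹' interior (((↑) : affineSpan ℝ F → Euc n) ⁻¹' F)) :=
    isOpen_interior.preimage hcont
  have h0 : (0 : ℝ) ∈ γ ⁻¹' interior (((↑) : affineSpan ℝ F → Euc n) ⁻¹' F) := by
    simp only [Set.mem_preimage, hγ0]; exact hy
  obtain ⟨δ₀, hδ₀, hball⟩ := Metric.isOpen_iff.1 hopen 0 h0
  refine ⟨δ₀ / 2, by positivity, ?_⟩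
  have : (δ₀ / 2 : ℝ) ∈ Metric.ball (0 : ℝ) δ₀ := by
    rw [Metric.mem_ball, dist_zero_right, Real.norm_eq_abs,
      abs_of_pos (by positivity : (0:ℝ) < δ₀/2)]
    linarith
  have := hball this
  simp only [Set.mem_preimage] at this
  have := interior_subset this
  simpa [hγ] using this

lemma normal_cone_facet {K F : Set (Euc n)} {a0 x s : Euc n}
    (hn : 1 ≤ n) (ha0 : a0 ≠ 0) (hF : F = faceOf K a0)
    (hdim : Module.finrank ℝ (vectorSpan ℝ F) = n - 1)
    (hx : x ∈ intrinsicInterior ℝ F) (hs : s ≠ 0)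
    (hsx : ∀ z ∈ K, (inner ℝ s z : ℝ) ≤ (inner ℝ s x : ℝ)) :
    ∃ lam : ℝ, lam ≠ 0 ∧ s = lam • a0 := by
  have hFK : F ⊆ K := by rw [hF]; exact fun z hz => hz.1
  have hxF : x ∈ F := intrinsicInterior_subset hx
  -- ⟨s, z⟩ = ⟨s, x⟩ for z ∈ F
  have hconst : ∀ z ∈ F, (inner ℝ s z : ℝ) = (inner ℝ s x : ℝ) := by
    intro z hz
    refine le_antisymm (hsx z (hFK hz)) ?_
    obtain ⟨δ, hδ, hmem⟩ := intrinsicInterior_extend hx hz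
    have := hsx _ (hFK hmem)
    simp only [inner_add_right, real_inner_smul_right, inner_sub_right] at this
    nlinarith
  have hconstA : ∀ z ∈ F, (inner ℝ a0 z : ℝ) = suppF K a0 := by
    intro z hz; rw [hF] at hz; exact hz.2
  -- s and a0 in orthogonal complement of vectorSpan F
  have horth : ∀ u : Euc n, (∀ z ∈ F, ∀ z' ∈ F, (inner ℝ u z : ℝ) = (inner ℝ u z' : ℝ)) →
      u ∈ (vectorSpan ℝ F)ᗮ := by
    intro u hu
    rw [Submodule.mem_orthogonal']
    intro v hv
    rw [vectorSpan_def] at hv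
    induction hv using Submodule.span_induction with
    | mem v hv =>
        obtain ⟨z, hz, z', hz', rfl⟩ := Set.mem_vsub.1 hv
        have h1 : (inner ℝ u z : ℝ) = inner ℝ u z' := hu z hz z' hz'
        rw [vsub_eq_sub, inner_sub_right, h1, sub_self]
    | zero => exact inner_zero_right u
    | add v v' _ _ h h' => rw [inner_add_right, h, h', add_zero]
    | smul c v _ h => rw [real_inner_smul_right, h, mul_zero]
  have hsO : s ∈ (vectorSpan ℝ F)ᗮ :=
    horth s (fun z hz z' hz' => by rw [hconst z hz, hconst z' hz'])
  have ha0O : a0 ∈ (vectorSpan ℝ F)ᗮ :=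
    horth a0 (fun z hz z' hz' => by rw [hconstA z hz, hconstA z' hz'])
  -- dimension count
  have hdim1 : Module.finrank ℝ ((vectorSpan ℝ F)ᗮ) = 1 := by
    have := Submodule.finrank_add_finrank_orthogonal (vectorSpan ℝ F)
    rw [hdim, finrank_euclideanSpace_fin] at this
    omega
  have hle : Submodule.span ℝ {a0} ≤ (vectorSpan ℝ F)ᗮ := by
    rw [Submodule.span_le, Set.singleton_subset_iff]; exact ha0O
  have heq : Submodule.span ℝ {a0} = (vectorSpan ℝ F)ᗮ := by
    apply Submodule.eq_of_le_of_finrank_le hle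
    rw [hdim1, finrank_span_singleton ha0]
  rw [← heq] at hsO
  obtain ⟨lam, hlam⟩ := Submodule.mem_span_singleton.1 hsO
  refine ⟨lam, ?_, hlam.symm⟩
  rintro rfl
  rw [zero_smul] at hlam
  exact hs hlam.symm


lemma suppF_singleton (y u : Euc n) : suppF {y} u = (inner ℝ u y : ℝ) := by
  rw [suppF, (isGreatest_image_singleton (fun x => (inner ℝ u x : ℝ)) y).csSup_eq]

lemma suppF_continuous {K : Set (Euc n)} (hc : IsCompact K) (hne : K.Nonempty) :
    Continuous fun s : Euc n => suppF K s := by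
  obtain ⟨R, hR⟩ := isBounded_iff_forall_norm_le.1 hc.isBounded
  obtain ⟨x₀, hx₀⟩ := hne
  have hR0 : 0 ≤ R := (norm_nonneg x₀).trans (hR x₀ hx₀)
  have key : ∀ s t : Euc n, suppF K s - suppF K t ≤ R * dist s t := by
    intro s t
    have h1 : suppF K s ≤ suppF K t + R * dist s t := by
      apply suppF_le_of_forall hc ⟨x₀, hx₀⟩
      intro x hx
      have h2 : (inner ℝ (s - t) x : ℝ) ≤ ‖s - t‖ * ‖x‖ := real_inner_le_norm _ _
      have h3 : (inner ℝ (s - t) x : ℝ) = (inner ℝ s x : ℝ) - (inner ℝ t x : ℝ) :=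
        inner_sub_left s t x
      have h4 : (inner ℝ t x : ℝ) ≤ suppF K t := suppF_mem_le hc ⟨x₀, hx₀⟩ hx
      have h5 : ‖s - t‖ * ‖x‖ ≤ ‖s - t‖ * R :=
        mul_le_mul_of_nonneg_left (hR x hx) (norm_nonneg _)
      rw [dist_eq_norm]
      nlinarith [norm_nonneg (s - t)]
    linarith
  have hlip : LipschitzWith (Real.toNNReal R) (fun s : Euc n => suppF K s) := by
    apply LipschitzWith.of_dist_le_mul
    intro s t
    rw [Real.coe_toNNReal R hR0, Real.dist_eq, abs_sub_le_iff]
    constructor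
    · exact key s t
    · rw [dist_comm]; exact key t s
  exact hlip.continuous

lemma breadthF_smul_ne {K C : Set (Euc n)} (hKc : IsCompact K) (hKne : K.Nonempty)
    (hCc : IsCompact C) (hCne : C.Nonempty) (hsym : C = -C) {lam : ℝ} (hlam : lam ≠ 0)
    (a : Euc n) : breadthF K C (lam • a) = breadthF K C a := by
  have hpos : ∀ t : ℝ, 0 < t → ∀ b : Euc n, breadthF K C (t • b) = breadthF K C b := by
    intro t ht b
    rw [breadthF_eq hKc hKne hCc hCne hsym, breadthF_eq hKc hKne hCc hCne hsym,
      ← smul_neg, suppF_smul_nonneg hKc hKne ht.le, suppF_smul_nonneg hKc hKne ht.le,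
      suppF_smul_nonneg hCc hCne ht.le, ← mul_add, mul_div_mul_left _ _ (ne_of_gt ht)]
  have hneg : ∀ b : Euc n, breadthF K C (-b) = breadthF K C b := by
    intro b
    rw [breadthF_eq hKc hKne hCc hCne hsym, breadthF_eq hKc hKne hCc hCne hsym, neg_neg,
      suppF_neg_symm hsym, add_comm]
  rcases lt_or_gt_of_ne hlam with h | h
  · have heq : lam • a = (-lam) • (-a) := by simp
    rw [heq, hpos (-lam) (by linarith) (-a), hneg]
  · exact hpos lam h a

lemma isCompact_hull_union {K : Set (Euc n)} (hconv : Convex ℝ K)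
    (hc : IsCompact K) (hne : K.Nonempty) (y : Euc n) :
    IsCompact (convexHull ℝ (K ∪ {y})) := by
  have h1 : convexHull ℝ (K ∪ {y}) = convexJoin ℝ {y} K := by
    rw [Set.union_comm,
      Convex.convexHull_union (convex_singleton y) hconv (Set.singleton_nonempty y) hne]
  have h2 : convexJoin ℝ {y} K =
      (fun p : ℝ × Euc n => (1 - p.1) • y + p.1 • p.2) '' (Set.Icc (0:ℝ) 1 ×ˢ K) := by
    ext x
    rw [mem_convexJoin]
    constructor
    · rintro ⟨a, ha, b, hb, hx⟩
      rw [Set.mem_singleton_iff] at ha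
      rw [ha] at hx
      rw [segment_eq_image ℝ y b] at hx
      obtain ⟨θ, hθ, hθx⟩ := hx
      exact ⟨(θ, b), Set.mk_mem_prod hθ hb, hθx⟩
    · rintro ⟨⟨θ, b⟩, ⟨hθ, hb⟩, rfl⟩
      refine ⟨y, rfl, b, hb, ?_⟩
      rw [segment_eq_image ℝ y b]
      exact ⟨θ, hθ, rfl⟩
  rw [h1, h2]
  exact (isCompact_Icc.prod hc).image (by fun_prop)

lemma normalize_dir {K C : Set (Euc n)} (hKc : IsCompact K) (hKne : K.Nonempty)
    (hCc : IsCompact C) (hCne : C.Nonempty) {s y : Euc n} {D : ℝ} (hs : s ≠ 0)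
    (h1 : suppF K s < (inner ℝ s y : ℝ))
    (h2 : D * suppF C s < (inner ℝ s y : ℝ) + suppF K (-s)) :
    ∃ u : Euc n, ‖u‖ = 1 ∧ suppF K u < (inner ℝ u y : ℝ) ∧
      D * suppF C u < (inner ℝ u y : ℝ) + suppF K (-u) := by
  have hsn : 0 < ‖s‖ := norm_pos_iff.2 hs
  have hcpos : 0 < ‖s‖⁻¹ := by positivity
  refine ⟨‖s‖⁻¹ • s, norm_smul_inv_norm hs, ?_, ?_⟩
  · rw [suppF_smul_nonneg hKc hKne hcpos.le, real_inner_smul_left]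
    exact mul_lt_mul_of_pos_left h1 hcpos
  · rw [real_inner_smul_left, ← smul_neg, suppF_smul_nonneg hKc hKne hcpos.le,
      suppF_smul_nonneg hCc hCne hcpos.le]
    have h3 := mul_lt_mul_of_pos_left h2 hcpos
    have e1 : D * (‖s‖⁻¹ * suppF C s) = ‖s‖⁻¹ * (D * suppF C s) := by ring
    rw [e1, mul_add] at *
    linarith

end aux

set_option maxHeartbeats 1000000 in
/-- if for a complete and reduced body (with the segment representation of
reduced bodies) some width-attaining segment has one endpoint a vertex of `K` and the
other in the relative interior of a facet of `K`, then `K` is of constant width. -/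
theorem segment_vertex_facet_constWidth {n m : ℕ} (q : Fin m → Euc n)
    (C : Set (Euc n)) (hC : C = convexHull ℝ (Set.range q ∪ -Set.range q))
    (hCint : (interior C).Nonempty)
    (K : Set (Euc n)) (hK : IsBody K)
    (hcomp : CompleteWrt K C) (hred : ReducedWrt K C)
    (c : Fin m → Euc n)
    (hrep : K = convexHull ℝ
      (⋃ i, (c i +ᵥ (widthF K C / 2) • segment ℝ (-(q i)) (q i))))
    (hatt : ∀ i, ∃ s : Euc n, s ≠ 0 ∧
      breadthF (c i +ᵥ (widthF K C / 2) • segment ℝ (-(q i)) (q i)) C s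
        = breadthF K C s ∧
      breadthF K C s = widthF K C)
    (i : Fin m)
    (hext : c i + (widthF K C / 2) • q i ∈ Set.extremePoints ℝ K)
    (hfacet : ∃ F : Set (Euc n), IsFacetOf K F ∧
      c i - (widthF K C / 2) • q i ∈ intrinsicInterior ℝ F) :
    ConstWidthWrt K C := by
  obtain ⟨hKconv, hKcpt, hKne⟩ := hK
  obtain ⟨x₀, hx₀⟩ := hKne
  have hKne : K.Nonempty := ⟨x₀, hx₀⟩
  -- trivial case n = 0
  rcases Nat.eq_zero_or_pos n with hn0 | hn
  · subst hn0
    haveI : Subsingleton (Euc 0) := ⟨fun a b => by ext j; exact j.elim0⟩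
    have hempty : {d : ℝ | ∃ s : Euc 0, s ≠ 0 ∧ d = breadthF K C s} = ∅ := by
      ext d
      simp only [Set.mem_setOf_eq, Set.mem_empty_iff_false, iff_false, not_exists]
      intro s h
      exact h.1 (Subsingleton.elim s 0)
    show widthF K C = diamF K C
    unfold widthF diamF
    rw [hempty, Real.sInf_empty, Real.sSup_empty]
  have hn' : 1 ≤ n := hn
  haveI : Nontrivial (Euc n) := by
    refine Module.nontrivial_of_finrank_pos (R := ℝ) (M := Euc n) ?_
    rw [finrank_euclideanSpace_fin]
    omega
  obtain ⟨s₁, hs₁⟩ := exists_ne (0 : Euc n)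
  -- C basic facts
  have hCconv : Convex ℝ C := hC ▸ convex_convexHull ℝ _
  have hCcpt : IsCompact C := by
    rw [hC]
    exact ((Set.finite_range q).union (Set.finite_range q).neg).isCompact_convexHull (𝕜 := ℝ)
  have hCne : C.Nonempty := hCint.mono interior_subset
  have hCsym : C = -C := by
    rw [hC, ← convexHull_neg]
    congr 1
    ext x
    simp only [Set.mem_union, Set.mem_neg, Set.mem_range]
    constructor
    · rintro (⟨j, rfl⟩ | hx)
      · exact Or.inr ⟨j, by rw [neg_neg]⟩
      · exact Or.inl hx
    · rintro (hx | ⟨j, hj⟩)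
      · exact Or.inr hx
      · exact Or.inl ⟨j, by simpa [neg_neg] using hj⟩
  have h0C : (0 : Euc n) ∈ interior C := by
    obtain ⟨x, hx⟩ := hCint
    have hnegx : -x ∈ interior C := by
      have hsub : -interior C ⊆ interior (-C) :=
        interior_maximal (Set.neg_subset_neg.2 interior_subset) isOpen_interior.neg
      rw [hCsym]
      exact hsub (Set.neg_mem_neg.2 hx)
    have hmid := (hCconv.interior) hx hnegx (le_of_lt one_half_pos) (le_of_lt one_half_pos)
      (by norm_num)
    have : (1/2 : ℝ) • x + (1/2 : ℝ) • (-x) = (0 : Euc n) := by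
      rw [smul_neg, add_neg_cancel]
    rwa [this] at hmid
  obtain ⟨r, hr, hball⟩ := Metric.mem_nhds_iff.1 (mem_interior_iff_mem_nhds.1 h0C)
  have hCpos : ∀ s : Euc n, s ≠ 0 → r / 2 * ‖s‖ ≤ suppF C s := by
    intro s hs
    have hsn : 0 < ‖s‖ := norm_pos_iff.2 hs
    have hmem : ((r / 2) * ‖s‖⁻¹) • s ∈ C := by
      apply hball
      rw [Metric.mem_ball, dist_zero_right, norm_smul, Real.norm_eq_abs,
        abs_of_pos (by positivity)]
      rw [mul_assoc, inv_mul_cancel₀ (ne_of_gt hsn), mul_one]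
      linarith
    have h1 := suppF_mem_le hCcpt hCne (u := s) hmem
    rw [real_inner_smul_right, real_inner_self_eq_norm_sq] at h1
    have h2 : r / 2 * ‖s‖⁻¹ * ‖s‖ ^ 2 = r / 2 * ‖s‖ := by
      field_simp
    rwa [h2] at h1
  have hCpos' : ∀ s : Euc n, s ≠ 0 → 0 < suppF C s := by
    intro s hs
    have hsn : 0 < ‖s‖ := norm_pos_iff.2 hs
    calc (0:ℝ) < r / 2 * ‖s‖ := by positivity
      _ ≤ suppF C s := hCpos s hs
  -- K bounds
  obtain ⟨R, hRb⟩ := isBounded_iff_forall_norm_le.1 hKcpt.isBounded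
  have hR0 : 0 ≤ R := (norm_nonneg x₀).trans (hRb x₀ hx₀)
  have hKle : ∀ u : Euc n, suppF K u ≤ ‖u‖ * R := by
    intro u
    apply suppF_le_of_forall hKcpt hKne
    intro x hx
    calc (inner ℝ u x : ℝ) ≤ ‖u‖ * ‖x‖ := real_inner_le_norm u x
      _ ≤ ‖u‖ * R := mul_le_mul_of_nonneg_left (hRb x hx) (norm_nonneg u)
  have hnum0 : ∀ s : Euc n, 0 ≤ suppF K s + suppF K (-s) := by
    intro s
    have h1 := suppF_mem_le hKcpt hKne (u := s) hx₀
    have h2 := suppF_mem_le hKcpt hKne (u := -s) hx₀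
    simp only [inner_neg_left] at h2
    linarith
  have hbr : ∀ s : Euc n, breadthF K C s = (suppF K s + suppF K (-s)) / suppF C s :=
    breadthF_eq hKcpt hKne hCcpt hCne hCsym
  -- the breadth set
  have hBne : {d : ℝ | ∃ s : Euc n, s ≠ 0 ∧ d = breadthF K C s}.Nonempty := ⟨_, s₁, hs₁, rfl⟩
  have hBlb : ∀ d ∈ {d : ℝ | ∃ s : Euc n, s ≠ 0 ∧ d = breadthF K C s}, (0:ℝ) ≤ d := by
    rintro d ⟨s, hs, rfl⟩
    rw [hbr s]
    exact div_nonneg (hnum0 s) (le_of_lt (hCpos' s hs))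
  have hBub : ∀ d ∈ {d : ℝ | ∃ s : Euc n, s ≠ 0 ∧ d = breadthF K C s}, d ≤ 4 * R / r := by
    rintro d ⟨s, hs, rfl⟩
    rw [hbr s, div_le_iff₀ (hCpos' s hs)]
    have hsn : 0 < ‖s‖ := norm_pos_iff.2 hs
    have h1 : suppF K s ≤ ‖s‖ * R := hKle s
    have h2 : suppF K (-s) ≤ ‖s‖ * R := by
      have := hKle (-s); rwa [norm_neg] at this
    have h3 : (4 * R / r) * (r / 2 * ‖s‖) = 2 * R * ‖s‖ := by
      field_simp
      ring
    have h4 : (4 * R / r) * (r / 2 * ‖s‖) ≤ (4 * R / r) * suppF C s :=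
      mul_le_mul_of_nonneg_left (hCpos s hs) (by positivity)
    nlinarith
  have hBbddA : BddAbove {d : ℝ | ∃ s : Euc n, s ≠ 0 ∧ d = breadthF K C s} :=
    ⟨4 * R / r, fun d hd => hBub d hd⟩
  have hw0 : 0 ≤ widthF K C := le_csInf hBne hBlb
  -- dichotomy on the width
  set w : ℝ := widthF K C with hw
  rcases eq_or_lt_of_le hw0 with hwzero | hwpos
  · -- width zero: K must be a singleton
    by_cases hsing : K = {x₀}
    · show w = diamF K C
      have hBz : {d : ℝ | ∃ s : Euc n, s ≠ 0 ∧ d = breadthF K C s} = {0} := by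
        ext d
        simp only [Set.mem_setOf_eq, Set.mem_singleton_iff]
        constructor
        · rintro ⟨s, hs, rfl⟩
          rw [hbr s, hsing, suppF_singleton, suppF_singleton, inner_neg_left]
          simp
        · rintro rfl
          refine ⟨s₁, hs₁, ?_⟩
          rw [hbr s₁, hsing, suppF_singleton, suppF_singleton, inner_neg_left]
          simp
      rw [hw]
      unfold widthF diamF
      rw [hBz, csInf_singleton, csSup_singleton]
    · exfalso
      obtain ⟨y₀, hy₀K, hy₀⟩ : ∃ y ∈ K, y ≠ x₀ := by
        by_contra h
        push_neg at h
        exact hsing (Set.eq_singleton_iff_unique_mem.2 ⟨hx₀, h⟩)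
      have hbody : IsBody {x₀} := ⟨convex_singleton x₀, isCompact_singleton, ⟨x₀, rfl⟩⟩
      have hss : {x₀} ⊂ K := by
        rw [Set.ssubset_iff_subset_ne]
        refine ⟨Set.singleton_subset_iff.2 hx₀, fun h => hy₀ ?_⟩
        rw [← h] at hy₀K
        exact Set.mem_singleton_iff.1 hy₀K
      have hlt := hred {x₀} hbody hss
      have hwz : widthF {x₀} C = 0 := by
        have hB' : {d : ℝ | ∃ s : Euc n, s ≠ 0 ∧ d = breadthF {x₀} C s} = {0} := by
          ext d
          simp only [Set.mem_setOf_eq, Set.mem_singleton_iff]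
          constructor
          · rintro ⟨s, hs, rfl⟩
            rw [breadthF_eq isCompact_singleton ⟨x₀, rfl⟩ hCcpt hCne hCsym s,
              suppF_singleton, suppF_singleton, inner_neg_left]
            simp
          · rintro rfl
            refine ⟨s₁, hs₁, ?_⟩
            rw [breadthF_eq isCompact_singleton ⟨x₀, rfl⟩ hCcpt hCne hCsym s₁,
              suppF_singleton, suppF_singleton, inner_neg_left]
            simp
        unfold widthF
        rw [hB', csInf_singleton]
      rw [hwz, ← hw, ← hwzero] at hlt
      exact lt_irrefl 0 hlt
  -- main case: positive width
  obtain ⟨F, ⟨a0, ha0, hFeq, hdim⟩, hxint⟩ := hfacet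
  have hxmF : c i - (w / 2) • q i ∈ F := intrinsicInterior_subset hxint
  have hxmK : c i - (w / 2) • q i ∈ K := by
    rw [hFeq] at hxmF; exact hxmF.1
  have hxmface : (inner ℝ a0 (c i - (w / 2) • q i) : ℝ) = suppF K a0 := by
    rw [hFeq] at hxmF; exact hxmF.2
  have hxpK : c i + (w / 2) • q i ∈ K := by
    rw [hrep]
    apply subset_convexHull ℝ _
    apply Set.mem_iUnion.2
    refine ⟨i, ?_⟩
    have hm : c i +ᵥ ((w / 2) • q i) ∈
        c i +ᵥ (w / 2) • segment ℝ (-(q i)) (q i) :=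
      Set.vadd_mem_vadd_set (Set.smul_mem_smul_set (right_mem_segment ℝ _ _))
    exact hm
  -- Step (ii): the breadth in direction a0 equals the width
  have hstep2 : breadthF K C a0 = w := by
    obtain ⟨s0, hs0, hseg, hbw⟩ := hatt i
    have ht2 : (0:ℝ) ≤ w / 2 := by linarith
    have hSd : suppF ((c i +ᵥ (w / 2) • segment ℝ (-(q i)) (q i)) -
        (c i +ᵥ (w / 2) • segment ℝ (-(q i)) (q i))) s0
        = w * |(inner ℝ s0 (q i) : ℝ)| := by
      rw [suppF_sub_eq' (isGreatest_segBody (c i) (q i) s0 ht2)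
        (isGreatest_segBody (c i) (q i) (-s0) ht2)]
      simp only [inner_neg_left, abs_neg]
      ring
    have hCd : suppF (C - C) s0 = 2 * suppF C s0 := by
      rw [suppF_sub_compact hCcpt hCne, suppF_neg_symm hCsym, two_mul]
    have hCs0 : 0 < suppF C s0 := hCpos' s0 hs0
    have hsegw : breadthF (c i +ᵥ (w / 2) • segment ℝ (-(q i)) (q i)) C s0
        = w := by rw [hseg, hbw]
    have hip : |(inner ℝ s0 (q i) : ℝ)| = suppF C s0 := by
      rw [breadthF, hSd, hCd] at hsegw
      have h1 := (div_eq_iff (by positivity : (2:ℝ) * suppF C s0 ≠ 0)).1 hsegw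
      have h2 : (2 * w) * |(inner ℝ s0 (q i) : ℝ)|
          = (2 * w) * suppF C s0 := by linear_combination h1
      exact mul_left_cancel₀ (by positivity) h2
    have hbwK : suppF K s0 + suppF K (-s0) = w * suppF C s0 := by
      rw [hbr s0] at hbw
      exact (div_eq_iff (ne_of_gt hCs0)).1 hbw
    have hxple := suppF_mem_le hKcpt hKne (u := s0) hxpK
    have hxmle := suppF_mem_le hKcpt hKne (u := s0) hxmK
    have hxple' := suppF_mem_le hKcpt hKne (u := -s0) hxpK
    have hxmle' := suppF_mem_le hKcpt hKne (u := -s0) hxmK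
    simp only [inner_neg_left] at hxple' hxmle'
    have hinnp : (inner ℝ s0 (c i + (w / 2) • q i) : ℝ)
        = (inner ℝ s0 (c i) : ℝ) + w / 2 * (inner ℝ s0 (q i) : ℝ) := by
      rw [inner_add_right, real_inner_smul_right]
    have hinnm : (inner ℝ s0 (c i - (w / 2) • q i) : ℝ)
        = (inner ℝ s0 (c i) : ℝ) - w / 2 * (inner ℝ s0 (q i) : ℝ) := by
      rw [inner_sub_right, real_inner_smul_right]
    rcases le_or_gt 0 (inner ℝ s0 (q i) : ℝ) with hsgn | hsgn
    · -- the segment is oriented along s0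
      have hipq : (inner ℝ s0 (q i) : ℝ) = suppF C s0 := by
        rw [← hip, abs_of_nonneg hsgn]
      have heqm : suppF K (-s0) = -(inner ℝ s0 (c i - (w / 2) • q i) : ℝ) := by
        have hxple2 : (inner ℝ s0 (c i) : ℝ) + w / 2 * (inner ℝ s0 (q i) : ℝ) ≤ suppF K s0 := by
          rw [← hinnp]; exact hxple
        have hCsub : w * suppF C s0 = 2 * (w / 2 * (inner ℝ s0 (q i) : ℝ)) := by
          rw [← hipq]; ring
        apply le_antisymm
        · rw [hinnm]
          linarith
        · exact hxmle'
      have hub : ∀ z ∈ K, (inner ℝ (-s0) z : ℝ)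
          ≤ (inner ℝ (-s0) (c i - (w / 2) • q i) : ℝ) := by
        intro z hz
        have h1 := suppF_mem_le hKcpt hKne (u := -s0) hz
        rw [heqm] at h1
        simp only [inner_neg_left] at h1 ⊢
        exact h1
      obtain ⟨lam, hlam, hlameq⟩ := normal_cone_facet hn' ha0 hFeq hdim hxint
        (neg_ne_zero.2 hs0) hub
      have hb1 : breadthF K C (-s0) = breadthF K C a0 := by
        rw [hlameq]
        exact breadthF_smul_ne hKcpt hKne hCcpt hCne hCsym hlam a0
      have hb2 : breadthF K C (-s0) = breadthF K C s0 := by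
        have : (-s0) = (-1 : ℝ) • s0 := by simp
        rw [this]
        exact breadthF_smul_ne hKcpt hKne hCcpt hCne hCsym (by norm_num) s0
      rw [← hb1, hb2, hbw]
    · -- the segment is oriented against s0
      have hipq : (inner ℝ s0 (q i) : ℝ) = -suppF C s0 := by
        rw [abs_of_neg hsgn] at hip
        linarith
      have heqm : suppF K s0 = (inner ℝ s0 (c i - (w / 2) • q i) : ℝ) := by
        have hxple2 : -((inner ℝ s0 (c i) : ℝ) + w / 2 * (inner ℝ s0 (q i) : ℝ))
            ≤ suppF K (-s0) := by
          rw [← hinnp]; exact hxple'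
        have hCs' : suppF C s0 = -(inner ℝ s0 (q i) : ℝ) := by linarith
        have hCsub : w * suppF C s0 = -(2 * (w / 2 * (inner ℝ s0 (q i) : ℝ))) := by
          rw [hCs']; ring
        apply le_antisymm
        · rw [hinnm]
          linarith
        · exact hxmle
      have hub : ∀ z ∈ K, (inner ℝ s0 z : ℝ)
          ≤ (inner ℝ s0 (c i - (w / 2) • q i) : ℝ) := by
        intro z hz
        have h1 := suppF_mem_le hKcpt hKne (u := s0) hz
        rw [heqm] at h1
        exact h1
      obtain ⟨lam, hlam, hlameq⟩ := normal_cone_facet hn' ha0 hFeq hdim hxint hs0 hub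
      have hb1 : breadthF K C s0 = breadthF K C a0 := by
        rw [hlameq]
        exact breadthF_smul_ne hKcpt hKne hCcpt hCne hCsym hlam a0
      rw [← hb1, hbw]
  have hwD : w ≤ diamF K C := by
    have hmem : breadthF K C a0 ∈ {d : ℝ | ∃ s : Euc n, s ≠ 0 ∧ d = breadthF K C s} :=
      ⟨a0, ha0, rfl⟩
    have h1 := le_csSup hBbddA hmem
    rw [hstep2] at h1
    exact h1
  -- Step (i): the key sequence from completeness
  have hkey : ∀ k : ℕ, ∃ u : Euc n, ‖u‖ = 1 ∧
      suppF K u < (inner ℝ u (c i - (w / 2) • q i + ((1:ℝ)/(k+1)) • a0) : ℝ) ∧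
      diamF K C * suppF C u <
        (inner ℝ u (c i - (w / 2) • q i + ((1:ℝ)/(k+1)) • a0) : ℝ) + suppF K (-u) := by
    intro k
    have hεpos : (0:ℝ) < (1:ℝ)/(k+1) := by positivity
    set y : Euc n := c i - (w / 2) • q i + ((1:ℝ)/(k+1)) • a0 with hydef
    have hinny : (inner ℝ a0 y : ℝ) = suppF K a0 + ((1:ℝ)/(k+1)) * ‖a0‖ ^ 2 := by
      rw [hydef, inner_add_right, real_inner_smul_right, real_inner_self_eq_norm_sq, hxmface]
    have ha0n : 0 < ‖a0‖ := norm_pos_iff.2 ha0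
    have hynot : y ∉ K := by
      intro hyK
      have h1 := suppF_mem_le hKcpt hKne (u := a0) hyK
      rw [hinny] at h1
      have hpos2 : 0 < ((1:ℝ)/(k+1)) * ‖a0‖ ^ 2 := by positivity
      linarith
    have hK'cpt : IsCompact (convexHull ℝ (K ∪ {y})) := isCompact_hull_union hKconv hKcpt hKne y
    have hKsub : K ⊆ convexHull ℝ (K ∪ {y}) :=
      Set.Subset.trans Set.subset_union_left (subset_convexHull ℝ _)
    have hK'ne : (convexHull ℝ (K ∪ {y})).Nonempty := hKne.mono hKsub
    have hyK' : y ∈ convexHull ℝ (K ∪ {y}) :=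
      subset_convexHull ℝ _ (Or.inr rfl)
    have hss : K ⊂ convexHull ℝ (K ∪ {y}) :=
      ⟨hKsub, fun h => hynot (h hyK')⟩
    have hdlt := hcomp _ ⟨convex_convexHull ℝ _, hK'cpt, hK'ne⟩ hss
    have hB'ne : {d : ℝ | ∃ s : Euc n, s ≠ 0 ∧
        d = breadthF (convexHull ℝ (K ∪ {y})) C s}.Nonempty := ⟨_, s₁, hs₁, rfl⟩
    obtain ⟨d, ⟨s, hs, rfl⟩, hdgt⟩ := exists_lt_of_lt_csSup hB'ne hdlt
    have hmax : ∀ u : Euc n, suppF (convexHull ℝ (K ∪ {y})) u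
        = max (suppF K u) (inner ℝ u y : ℝ) := fun u =>
      suppF_hull (isGreatest_image_union (suppF_isGreatest hKcpt hKne u)
        (isGreatest_image_singleton _ y))
    have hb' : breadthF (convexHull ℝ (K ∪ {y})) C s
        = (max (suppF K s) (inner ℝ s y : ℝ) + max (suppF K (-s)) (inner ℝ (-s) y : ℝ))
          / suppF C s := by
      rw [breadthF_eq hK'cpt hK'ne hCcpt hCne hCsym s, hmax s, hmax (-s)]
    rw [hb'] at hdgt
    have hCs := hCpos' s hs
    have hnum' : diamF K C * suppF C s
        < max (suppF K s) (inner ℝ s y : ℝ) + max (suppF K (-s)) (inner ℝ (-s) y : ℝ) :=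
      (lt_div_iff₀ hCs).1 hdgt
    have hnumK : suppF K s + suppF K (-s) ≤ diamF K C * suppF C s := by
      have hmem : breadthF K C s ∈ {d : ℝ | ∃ s : Euc n, s ≠ 0 ∧ d = breadthF K C s} :=
        ⟨s, hs, rfl⟩
      have h1 := le_csSup hBbddA hmem
      rw [hbr s] at h1
      exact (div_le_iff₀ hCs).1 h1
    rcases lt_or_ge (suppF K s) (inner ℝ s y : ℝ) with hcase | hcase
    · have hyneg : (inner ℝ (-s) y : ℝ) ≤ suppF K (-s) := by
        by_contra hcon
        push_neg at hcon
        have h0 := hnum0 s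
        rw [inner_neg_left] at hcon
        linarith
      have hfin2 : diamF K C * suppF C s < (inner ℝ s y : ℝ) + suppF K (-s) := by
        rw [max_eq_right (le_of_lt hcase), max_eq_left hyneg] at hnum'
        exact hnum'
      exact normalize_dir hKcpt hKne hCcpt hCne hs hcase hfin2
    · have hypos : suppF K (-s) < (inner ℝ (-s) y : ℝ) := by
        by_contra hcon
        push_neg at hcon
        rw [max_eq_left hcase, max_eq_left hcon] at hnum'
        linarith
      have hfin2 : diamF K C * suppF C (-s) < (inner ℝ (-s) y : ℝ) + suppF K (-(-s)) := by
        rw [suppF_neg_symm hCsym, neg_neg]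
        rw [max_eq_left hcase, max_eq_right (le_of_lt hypos)] at hnum'
        rw [inner_neg_left] at *
        linarith
      exact normalize_dir hKcpt hKne hCcpt hCne (neg_ne_zero.2 hs) hypos hfin2
  choose u hu1 hu2 hu3 using hkey
  have husph : ∀ k, u k ∈ Metric.sphere (0 : Euc n) 1 := fun k => by
    rw [Metric.mem_sphere, dist_zero_right]; exact hu1 k
  obtain ⟨ustar, hustar, φ, hφ, huconv⟩ := (isCompact_sphere (0:Euc n) 1).tendsto_subseq husph
  have hustar1 : ‖ustar‖ = 1 := by rwa [Metric.mem_sphere, dist_zero_right] at hustar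
  have hustar0 : ustar ≠ 0 := by
    intro h
    rw [h, norm_zero] at hustar1
    norm_num at hustar1
  have hytend : Filter.Tendsto (fun k : ℕ => c i - (w / 2) • q i + ((1:ℝ)/(k+1)) • a0)
      Filter.atTop (nhds (c i - (w / 2) • q i)) := by
    have h1 : Filter.Tendsto (fun k : ℕ => ((1:ℝ)/(k+1))) Filter.atTop (nhds 0) :=
      tendsto_one_div_add_atTop_nhds_zero_nat
    have h2 := h1.smul_const a0
    rw [zero_smul] at h2
    have h3 := (tendsto_const_nhds (x := c i - (w / 2) • q i)
      (f := (Filter.atTop : Filter ℕ))).add h2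
    rwa [add_zero] at h3
  have hKcont : Continuous fun s : Euc n => suppF K s := suppF_continuous hKcpt hKne
  have hCcont : Continuous fun s : Euc n => suppF C s := suppF_continuous hCcpt hCne
  have husub : Filter.Tendsto (fun j => u (φ j)) Filter.atTop (nhds ustar) := huconv
  have hysub : Filter.Tendsto (fun j : ℕ => c i - (w / 2) • q i + ((1:ℝ)/(φ j + 1)) • a0)
      Filter.atTop (nhds (c i - (w / 2) • q i)) := by
    have := hytend.comp (hφ.tendsto_atTop)
    simpa [Function.comp_def] using this
  have hA : Filter.Tendsto
      (fun j => (inner ℝ (u (φ j)) (c i - (w / 2) • q i + ((1:ℝ)/(φ j + 1)) • a0) : ℝ))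
      Filter.atTop (nhds (inner ℝ ustar (c i - (w / 2) • q i) : ℝ)) := by
    have := Filter.Tendsto.inner (𝕜 := ℝ) husub hysub
    simpa using this
  have hB1 : Filter.Tendsto (fun j => suppF K (u (φ j))) Filter.atTop
      (nhds (suppF K ustar)) := (hKcont.tendsto ustar).comp husub
  have hB2 : Filter.Tendsto (fun j => suppF K (-(u (φ j)))) Filter.atTop
      (nhds (suppF K (-ustar))) := by
    have hc2 : Continuous fun s : Euc n => suppF K (-s) := hKcont.comp continuous_neg
    exact (hc2.tendsto ustar).comp husub
  have hB3 : Filter.Tendsto (fun j => diamF K C * suppF C (u (φ j))) Filter.atTop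
      (nhds (diamF K C * suppF C ustar)) :=
    tendsto_const_nhds.mul ((hCcont.tendsto ustar).comp husub)
  have hsle : suppF K ustar ≤ (inner ℝ ustar (c i - (w / 2) • q i) : ℝ) :=
    le_of_tendsto_of_tendsto' hB1 hA (fun j => le_of_lt (hu2 (φ j)))
  have hsge : (inner ℝ ustar (c i - (w / 2) • q i) : ℝ) ≤ suppF K ustar :=
    suppF_mem_le hKcpt hKne hxmK
  have hDle : diamF K C * suppF C ustar
      ≤ (inner ℝ ustar (c i - (w / 2) • q i) : ℝ) + suppF K (-ustar) :=
    le_of_tendsto_of_tendsto' hB3 (hA.add hB2) (fun j => le_of_lt (hu3 (φ j)))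
  have hDb : diamF K C ≤ breadthF K C ustar := by
    rw [hbr ustar, le_div_iff₀ (hCpos' _ hustar0)]
    have heq : (inner ℝ ustar (c i - (w / 2) • q i) : ℝ) = suppF K ustar :=
      le_antisymm hsge hsle
    linarith
  have hub : ∀ z ∈ K, (inner ℝ ustar z : ℝ)
      ≤ (inner ℝ ustar (c i - (w / 2) • q i) : ℝ) := by
    intro z hz
    have h1 := suppF_mem_le hKcpt hKne (u := ustar) hz
    linarith
  obtain ⟨lam, hlam, hlameq⟩ := normal_cone_facet hn' ha0 hFeq hdim hxint hustar0 hub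
  have hbeq : breadthF K C ustar = breadthF K C a0 := by
    rw [hlameq]
    exact breadthF_smul_ne hKcpt hKne hCcpt hCne hCsym hlam a0
  have hDw : diamF K C ≤ w := by
    rw [← hstep2, ← hbeq]
    exact hDb
  exact le_antisymm hwD hDw
end

section
/- Let K, C ⊆ ℝⁿ be convex bodies with C having nonempty interior. If K is complete with respect to C, then every boundary point of K is the endpoint of a diametrical segment: for every x in the boundary of K there exists y ∈ K such that 2·R(conv({x,y}), C) = D(K,C). -/
open Pointwise

open Set Metric

variable {n : ℕ}

lemma bdd_inner {K : Set (Euc n)} (hK : IsCompact K) (s : Euc n) :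
    BddAbove ((fun x => (inner ℝ s x : ℝ)) '' K) :=
  (hK.image (Continuous.inner continuous_const continuous_id)).bddAbove

lemma le_suppF {K : Set (Euc n)} (hK : IsCompact K) {x : Euc n} (hx : x ∈ K)
    (s : Euc n) : (inner ℝ s x : ℝ) ≤ suppF K s :=
  le_csSup (bdd_inner hK s) ⟨x, hx, rfl⟩

lemma suppF_le {K : Set (Euc n)} (hne : K.Nonempty) {s : Euc n} {M : ℝ}
    (h : ∀ x ∈ K, (inner ℝ s x : ℝ) ≤ M) : suppF K s ≤ M :=
  csSup_le (hne.image _) (by rintro _ ⟨x, hx, rfl⟩; exact h x hx)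

/-- the gauge of `B` -/
noncomputable def gB {n : ℕ} (B : Set (Euc n)) (v : Euc n) : ℝ :=
  sInf {l : ℝ | 0 ≤ l ∧ v ∈ l • B}

variable {B : Set (Euc n)} {ε : ℝ}

lemma gB_bddBelow (B : Set (Euc n)) (v : Euc n) :
    BddBelow {l : ℝ | 0 ≤ l ∧ v ∈ l • B} := ⟨0, fun _ hb => hb.1⟩

lemma gB_mem_scale (hB0 : (0 : Euc n) ∈ B) (hε : 0 < ε) (hball : ball (0 : Euc n) ε ⊆ B)
    (v : Euc n) : (2 * ‖v‖ / ε) ∈ {l : ℝ | 0 ≤ l ∧ v ∈ l • B} := by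
  refine ⟨by positivity, ?_⟩
  rcases eq_or_ne v 0 with rfl | hv
  · exact ⟨0, hB0, by simp⟩
  · have hnv : (0:ℝ) < ‖v‖ := norm_pos_iff.2 hv
    refine ⟨(ε / (2 * ‖v‖)) • v, hball ?_, ?_⟩
    · rw [mem_ball_zero_iff, norm_smul, Real.norm_eq_abs, abs_of_pos (by positivity)]
      rw [div_mul_eq_mul_div, mul_comm]
      calc ‖v‖ * ε / (2 * ‖v‖) = ε / 2 := by field_simp
      _ < ε := by linarith
    · show (2 * ‖v‖ / ε) • (ε / (2 * ‖v‖)) • v = v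
      rw [smul_smul]
      have : 2 * ‖v‖ / ε * (ε / (2 * ‖v‖)) = 1 := by field_simp
      rw [this, one_smul]

lemma gB_nonneg (hB0 : (0 : Euc n) ∈ B) (hε : 0 < ε) (hball : ball (0 : Euc n) ε ⊆ B)
    (v : Euc n) : 0 ≤ gB B v :=
  le_csInf ⟨_, gB_mem_scale hB0 hε hball v⟩ fun _ hb => hb.1

lemma gB_le {v : Euc n} {l : ℝ} (h0 : 0 ≤ l) (hv : v ∈ l • B) : gB B v ≤ l :=
  csInf_le (gB_bddBelow B v) ⟨h0, hv⟩

lemma gB_le_norm (hB0 : (0 : Euc n) ∈ B) (hε : 0 < ε) (hball : ball (0 : Euc n) ε ⊆ B)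
    (v : Euc n) : gB B v ≤ 2 * ‖v‖ / ε :=
  csInf_le (gB_bddBelow B v) (gB_mem_scale hB0 hε hball v)

lemma smul_set_mono_scale (hBconv : Convex ℝ B) (hB0 : (0 : Euc n) ∈ B)
    {l l' : ℝ} (h0 : 0 ≤ l) (hle : l ≤ l') : l • B ⊆ l' • B := by
  rintro _ ⟨b, hb, rfl⟩
  rcases eq_or_lt_of_le (h0.trans hle) with h | h
  · have hl : l = 0 := le_antisymm (hle.trans h.symm.le) h0
    exact ⟨b, hb, by rw [hl, ← h]⟩
  · have hl' : l' ≠ 0 := ne_of_gt h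
    refine ⟨(l / l') • b + (1 - l / l') • 0,
      hBconv hb hB0 (by positivity) (by rw [sub_nonneg]; exact div_le_one_of_le₀ hle h.le)
        (by ring), ?_⟩
    show l' • ((l / l') • b + (1 - l / l') • (0 : Euc n)) = l • b
    rw [smul_zero, add_zero, smul_smul]
    congr 1
    field_simp

lemma gB_add_le (hBconv : Convex ℝ B) (hB0 : (0 : Euc n) ∈ B) (hε : 0 < ε)
    (hball : ball (0 : Euc n) ε ⊆ B) (a b : Euc n) :
    gB B (a + b) ≤ gB B a + gB B b := by
  have key : ∀ l1 ∈ {l : ℝ | 0 ≤ l ∧ a ∈ l • B}, ∀ l2 ∈ {l : ℝ | 0 ≤ l ∧ b ∈ l • B},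
      gB B (a + b) ≤ l1 + l2 := by
    rintro l1 ⟨h1, p, hp, rfl⟩ l2 ⟨h2, q, hq, rfl⟩
    refine gB_le (by positivity) ?_
    rcases eq_or_lt_of_le (add_nonneg h1 h2 : (0:ℝ) ≤ l1 + l2) with h | h
    · have hl1 : l1 = 0 := by linarith
      have hl2 : l2 = 0 := by linarith
      refine ⟨0, hB0, ?_⟩
      show (l1 + l2) • (0 : Euc n) = l1 • p + l2 • q
      rw [hl1, hl2]; simp
    · refine ⟨(l1 / (l1 + l2)) • p + (l2 / (l1 + l2)) • q,
        hBconv hp hq (by positivity) (by positivity) (by field_simp), ?_⟩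
      show (l1 + l2) • ((l1 / (l1 + l2)) • p + (l2 / (l1 + l2)) • q) = l1 • p + l2 • q
      rw [smul_add, smul_smul, smul_smul]
      have hne : l1 + l2 ≠ 0 := ne_of_gt h
      congr 1 <;> (congr 1; field_simp)
  have h1 : ∀ l2 ∈ {l : ℝ | 0 ≤ l ∧ b ∈ l • B}, gB B (a + b) - l2 ≤ gB B a := by
    intro l2 hl2
    exact le_csInf ⟨_, gB_mem_scale hB0 hε hball a⟩ fun l1 hl1 => by
      linarith [key l1 hl1 l2 hl2]
  have h2 : gB B (a + b) - gB B a ≤ gB B b := by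
    refine le_csInf ⟨_, gB_mem_scale hB0 hε hball b⟩ fun l2 hl2 => ?_
    linarith [h1 l2 hl2]
  linarith

lemma gB_neg (hBsym : ∀ v ∈ B, -v ∈ B) (v : Euc n) : gB B (-v) = gB B v := by
  have hset : ∀ w : Euc n, ∀ l : ℝ, w ∈ l • B → -w ∈ l • B := by
    rintro w l ⟨b, hb, rfl⟩
    exact ⟨-b, hBsym b hb, by simp⟩
  unfold gB
  congr 1
  ext l
  exact ⟨fun ⟨h0, h⟩ => ⟨h0, by simpa using hset _ _ h⟩, fun ⟨h0, h⟩ => ⟨h0, hset _ _ h⟩⟩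

lemma suppF_nonneg_of_zero_mem {A : Set (Euc n)} (hA : IsCompact A) (h0 : (0 : Euc n) ∈ A)
    (s : Euc n) : 0 ≤ suppF A s := by
  have := le_suppF hA h0 s
  simpa using this

lemma gB_inner_le (hBcp : IsCompact B) (hB0 : (0 : Euc n) ∈ B) (hε : 0 < ε)
    (hball : ball (0 : Euc n) ε ⊆ B) (v s : Euc n) :
    (inner ℝ s v : ℝ) ≤ gB B v * suppF B s := by
  have hs0 : 0 ≤ suppF B s := suppF_nonneg_of_zero_mem hBcp hB0 s
  have key : ∀ l ∈ {l : ℝ | 0 ≤ l ∧ v ∈ l • B}, (inner ℝ s v : ℝ) ≤ l * suppF B s := by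
    rintro l ⟨h0, b, hb, rfl⟩
    show (inner ℝ s (l • b) : ℝ) ≤ l * suppF B s
    rw [real_inner_smul_right]
    exact mul_le_mul_of_nonneg_left (le_suppF hBcp hb s) h0
  rcases eq_or_lt_of_le hs0 with h | h
  · have := key _ (gB_mem_scale hB0 hε hball v)
    rw [← h, mul_zero] at this ⊢
    exact this
  · refine (div_le_iff₀ h).mp ?_
    exact le_csInf ⟨_, gB_mem_scale hB0 hε hball v⟩ fun l hl =>
      (div_le_iff₀ h).mpr (key l hl)

lemma gB_sep (hBconv : Convex ℝ B) (hBcp : IsCompact B) (hB0 : (0 : Euc n) ∈ B)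
    {v : Euc n} {t : ℝ} (h0 : 0 ≤ t) (hlt : t < gB B v) :
    ∃ s : Euc n, s ≠ 0 ∧ t * suppF B s < (inner ℝ s v : ℝ) := by
  have hv : v ∉ t • B := fun hmem => absurd (gB_le h0 hmem) (not_le.2 hlt)
  have hcvx : Convex ℝ (t • B) := hBconv.smul t
  have hcp : IsCompact (t • B) := by
    rw [← Set.image_smul]
    exact hBcp.image (continuous_const_smul t)
  obtain ⟨f, u, hf1, hf2⟩ := geometric_hahn_banach_closed_point hcvx hcp.isClosed hv
  set s := (InnerProductSpace.toDual ℝ (Euc n)).symm f with hs_def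
  have hs : ∀ x : Euc n, (inner ℝ s x : ℝ) = f x := fun x =>
    InnerProductSpace.toDual_symm_apply
  have h0mem : (0 : Euc n) ∈ t • B := ⟨0, hB0, smul_zero t⟩
  have hu0 : 0 < u := by
    have := hf1 0 h0mem
    simpa using this
  have hsne : s ≠ 0 := by
    intro h
    have : (inner ℝ s v : ℝ) = 0 := by rw [h]; simp
    rw [hs v] at this
    linarith [hf2]
  refine ⟨s, hsne, ?_⟩
  rw [hs v]
  rcases eq_or_lt_of_le h0 with h | h
  · rw [← h, zero_mul]; linarith
  · have hsupp : suppF B s ≤ u / t := by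
      refine suppF_le ⟨0, hB0⟩ fun b hb => ?_
      have := hf1 (t • b) ⟨b, hb, rfl⟩
      rw [← hs (t • b), real_inner_smul_right] at this
      rw [le_div_iff₀ h]
      linarith [this]
    calc t * suppF B s ≤ t * (u / t) := by
          exact mul_le_mul_of_nonneg_left hsupp h0
      _ = u := by field_simp
      _ < f v := hf2

lemma isCompact_sub_set {A A' : Set (Euc n)} (hA : IsCompact A) (hA' : IsCompact A') :
    IsCompact (A - A') := by
  have : A - A' = (fun p : Euc n × Euc n => p.1 - p.2) '' (A ×ˢ A') := by
    ext z
    constructor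
    · rintro ⟨a, ha, b, hb, rfl⟩
      exact ⟨(a, b), ⟨ha, hb⟩, rfl⟩
    · rintro ⟨⟨a, b⟩, ⟨ha, hb⟩, rfl⟩
      exact ⟨a, ha, b, hb, rfl⟩
  rw [this]
  exact (hA.prod hA').image (continuous_fst.sub continuous_snd)

lemma suppF_sub_eq {A A' : Set (Euc n)} (hA : IsCompact A) (hA' : IsCompact A')
    (hAne : A.Nonempty) (hA'ne : A'.Nonempty) (s : Euc n) :
    suppF (A - A') s = suppF A s + suppF A' (-s) := by
  have hcp : IsCompact (A - A') := isCompact_sub_set hA hA'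
  apply le_antisymm
  · refine suppF_le (hAne.sub hA'ne) ?_
    rintro _ ⟨a, ha, b, hb, rfl⟩
    have h1 : (inner ℝ s (a - b) : ℝ) = inner ℝ s a + (inner ℝ (-s) b : ℝ) := by
      rw [inner_sub_right, inner_neg_left]; ring
    rw [h1]
    exact add_le_add (le_suppF hA ha s) (le_suppF hA' hb (-s))
  · have key : ∀ b ∈ A', suppF A s ≤ suppF (A - A') s - (inner ℝ (-s) b : ℝ) := by
      intro b hb
      refine suppF_le hAne fun a ha => ?_
      have : (inner ℝ s (a - b) : ℝ) ≤ suppF (A - A') s :=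
        le_suppF hcp (Set.sub_mem_sub ha hb) s
      rw [inner_sub_right] at this
      rw [inner_neg_left]
      linarith
    have : suppF A' (-s) ≤ suppF (A - A') s - suppF A s := by
      refine suppF_le hA'ne fun b hb => ?_
      linarith [key b hb]
    linarith



variable {C : Set (Euc n)}

lemma zero_mem_sub {A : Set (Euc n)} (hAne : A.Nonempty) : (0 : Euc n) ∈ A - A := by
  obtain ⟨a, ha⟩ := hAne
  exact ⟨a, ha, a, ha, sub_self a⟩

lemma suppB_pos (hCcp : IsCompact C) (hε : 0 < ε) (hball : ball (0 : Euc n) ε ⊆ C - C)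
    {s : Euc n} (hs : s ≠ 0) : 0 < suppF (C - C) s := by
  have hns : (0:ℝ) < ‖s‖ := norm_pos_iff.2 hs
  have hw : (ε / (2 * ‖s‖)) • s ∈ C - C := by
    apply hball
    rw [mem_ball_zero_iff, norm_smul, Real.norm_eq_abs, abs_of_pos (by positivity)]
    calc ε / (2 * ‖s‖) * ‖s‖ = ε / 2 := by field_simp
      _ < ε := by linarith
  have := le_suppF (isCompact_sub_set hCcp hCcp) hw s
  rw [real_inner_smul_right, real_inner_self_eq_norm_sq] at this
  have hpos : (0:ℝ) < ε / (2 * ‖s‖) * ‖s‖ ^ 2 := by positivity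
  linarith

lemma breadthF_nonneg {A : Set (Euc n)} (hA : IsCompact A) (hAne : A.Nonempty)
    (hCcp : IsCompact C) (hCne : C.Nonempty) (s : Euc n) : 0 ≤ breadthF A C s := by
  unfold breadthF
  apply div_nonneg
  · have := suppF_nonneg_of_zero_mem (isCompact_sub_set hA hA) (zero_mem_sub hAne) s
    linarith
  · exact suppF_nonneg_of_zero_mem (isCompact_sub_set hCcp hCcp) (zero_mem_sub hCne) s

lemma breadthF_le_of_suppF_le {A : Set (Euc n)} (hCcp : IsCompact C) (hε : 0 < ε)
    (hball : ball (0 : Euc n) ε ⊆ C - C) {s : Euc n} (hs : s ≠ 0) {M : ℝ}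
    (h : suppF (A - A) s ≤ (M / 2) * suppF (C - C) s) : breadthF A C s ≤ M := by
  have hp := suppB_pos hCcp hε hball hs
  unfold breadthF
  rw [div_le_iff₀ hp]
  linarith

lemma suppF_sub_le_gauge {A : Set (Euc n)} (hA : IsCompact A) (hAne : A.Nonempty)
    (hCcp : IsCompact C) (hCne : C.Nonempty) (hε : 0 < ε)
    (hball : ball (0 : Euc n) ε ⊆ C - C) {M : ℝ}
    (hM : ∀ w ∈ A - A, gB (C - C) w ≤ M) (s : Euc n) :
    suppF (A - A) s ≤ M * suppF (C - C) s := by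
  have hs0 : 0 ≤ suppF (C - C) s :=
    suppF_nonneg_of_zero_mem (isCompact_sub_set hCcp hCcp) (zero_mem_sub hCne) s
  refine suppF_le (hAne.sub hAne) fun w hw => ?_
  calc (inner ℝ s w : ℝ) ≤ gB (C - C) w * suppF (C - C) s :=
        gB_inner_le (isCompact_sub_set hCcp hCcp) (zero_mem_sub hCne) hε hball w s
    _ ≤ M * suppF (C - C) s := mul_le_mul_of_nonneg_right (hM w hw) hs0

lemma exists_breadth_bound {A : Set (Euc n)} (hA : IsCompact A) (hAne : A.Nonempty)
    (hCcp : IsCompact C) (hCne : C.Nonempty) (hε : 0 < ε)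
    (hball : ball (0 : Euc n) ε ⊆ C - C) :
    ∃ M, 0 ≤ M ∧ ∀ s : Euc n, s ≠ 0 → breadthF A C s ≤ M := by
  obtain ⟨R, hR⟩ := isBounded_iff_forall_norm_le.mp hA.isBounded
  have hR0 : 0 ≤ R := le_trans (norm_nonneg _) (hR _ hAne.choose_spec)
  refine ⟨2 * (4 * R / ε), by positivity, fun s hs => ?_⟩
  apply breadthF_le_of_suppF_le hCcp hε hball hs
  have : (2 * (4 * R / ε)) / 2 = 4 * R / ε := by ring
  rw [this]
  apply suppF_sub_le_gauge hA hAne hCcp hCne hε hball (fun w hw => ?_) s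
  obtain ⟨a, ha, b, hb, rfl⟩ := hw
  calc gB (C - C) (a - b) ≤ 2 * ‖a - b‖ / ε :=
        gB_le_norm (zero_mem_sub hCne) hε hball _
    _ ≤ 4 * R / ε := by
        have h1 : ‖a - b‖ ≤ 2 * R := by
          calc ‖a - b‖ ≤ ‖a‖ + ‖b‖ := norm_sub_le a b
            _ ≤ 2 * R := by linarith [hR a ha, hR b hb]
        have h2 : 2 * ‖a - b‖ ≤ 4 * R := by linarith
        gcongr

lemma bddAbove_diamSet {A : Set (Euc n)} (hA : IsCompact A) (hAne : A.Nonempty)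
    (hCcp : IsCompact C) (hCne : C.Nonempty) (hε : 0 < ε)
    (hball : ball (0 : Euc n) ε ⊆ C - C) :
    BddAbove {d : ℝ | ∃ s : Euc n, s ≠ 0 ∧ d = breadthF A C s} := by
  obtain ⟨M, _, hM⟩ := exists_breadth_bound hA hAne hCcp hCne hε hball
  exact ⟨M, by rintro _ ⟨s, hs, rfl⟩; exact hM s hs⟩

lemma breadth_le_diamF {A : Set (Euc n)} (hA : IsCompact A) (hAne : A.Nonempty)
    (hCcp : IsCompact C) (hCne : C.Nonempty) (hε : 0 < ε)
    (hball : ball (0 : Euc n) ε ⊆ C - C) {s : Euc n} (hs : s ≠ 0) :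
    breadthF A C s ≤ diamF A C :=
  le_csSup (bddAbove_diamSet hA hAne hCcp hCne hε hball) ⟨s, hs, rfl⟩

lemma diamF_nonneg {A : Set (Euc n)} (hA : IsCompact A) (hAne : A.Nonempty)
    (hCcp : IsCompact C) (hCne : C.Nonempty) (hε : 0 < ε)
    (hball : ball (0 : Euc n) ε ⊆ C - C) {e : Euc n} (he : e ≠ 0) :
    0 ≤ diamF A C :=
  (breadthF_nonneg hA hAne hCcp hCne e).trans
    (breadth_le_diamF hA hAne hCcp hCne hε hball he)

lemma diamF_le {A : Set (Euc n)} {M : ℝ} {e : Euc n} (he : e ≠ 0)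
    (h : ∀ s : Euc n, s ≠ 0 → breadthF A C s ≤ M) : diamF A C ≤ M :=
  csSup_le ⟨_, ⟨e, he, rfl⟩⟩ (by rintro _ ⟨s, hs, rfl⟩; exact h s hs)

lemma two_gauge_le_diamF {A : Set (Euc n)} (hA : IsCompact A) (hAne : A.Nonempty)
    (hCconv : Convex ℝ C) (hCcp : IsCompact C) (hCne : C.Nonempty) (hε : 0 < ε)
    (hball : ball (0 : Euc n) ε ⊆ C - C) {e : Euc n} (he : e ≠ 0)
    {u v : Euc n} (hu : u ∈ A) (hv : v ∈ A) :
    2 * gB (C - C) (u - v) ≤ diamF A C := by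
  have hBcp := isCompact_sub_set hCcp hCcp
  have hB0 := zero_mem_sub hCne
  have hBconv : Convex ℝ (C - C) := hCconv.sub hCconv
  have hD0 : 0 ≤ diamF A C := diamF_nonneg hA hAne hCcp hCne hε hball he
  by_contra hcon
  push_neg at hcon
  have ht : diamF A C / 2 < gB (C - C) (u - v) := by linarith
  obtain ⟨s, hs, hsep⟩ := gB_sep hBconv hBcp hB0 (by linarith : (0:ℝ) ≤ diamF A C / 2) ht
  have hmem : u - v ∈ A - A := Set.sub_mem_sub hu hv
  have h1 : (inner ℝ s (u - v) : ℝ) ≤ suppF (A - A) s :=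
    le_suppF (isCompact_sub_set hA hA) hmem s
  have h2 : breadthF A C s ≤ diamF A C :=
    breadth_le_diamF hA hAne hCcp hCne hε hball hs
  have hp := suppB_pos hCcp hε hball hs
  unfold breadthF at h2
  rw [div_le_iff₀ hp] at h2
  linarith


lemma circum_seg_eq (hCconv : Convex ℝ C) (x y : Euc n) :
    circumF (segment ℝ x y) C = gB (C - C) (x - y) := by
  unfold circumF gB
  congr 1
  ext l
  simp only [Set.mem_setOf_eq]
  constructor
  · rintro ⟨h0, c, hsub⟩
    refine ⟨h0, ?_⟩
    obtain ⟨za, hza, hxa⟩ := hsub (left_mem_segment ℝ x y)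
    obtain ⟨zb, hzb, hyb⟩ := hsub (right_mem_segment ℝ x y)
    obtain ⟨a, ha, rfl⟩ := hza
    obtain ⟨b, hb, rfl⟩ := hzb
    have hx : x = c + l • a := hxa.symm
    have hy : y = c + l • b := hyb.symm
    refine ⟨a - b, Set.sub_mem_sub ha hb, ?_⟩
    show l • (a - b) = x - y
    rw [smul_sub, hx, hy]
    abel
  · rintro ⟨h0, w, hw, hwe⟩
    obtain ⟨a, ha, b, hb, rfl⟩ := hw
    refine ⟨h0, x - l • a, ?_⟩
    have hconv : Convex ℝ ((x - l • a) +ᵥ l • C) := (hCconv.smul l).vadd _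
    have hx : x ∈ (x - l • a) +ᵥ l • C := by
      refine ⟨l • a, ⟨a, ha, rfl⟩, ?_⟩
      show (x - l • a) + l • a = x
      abel
    have hy : y ∈ (x - l • a) +ᵥ l • C := by
      refine ⟨l • b, ⟨b, hb, rfl⟩, ?_⟩
      show (x - l • a) + l • b = y
      have : l • (a - b) = x - y := hwe
      rw [smul_sub] at this
      have h2 : l • b = l • a - (x - y) := by
        rw [← this]; abel
      rw [h2]; abel
    exact hconv.segment_subset hx hy

lemma gB_continuous_shift (hBconv : Convex ℝ B) (hB0 : (0 : Euc n) ∈ B) (hε : 0 < ε)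
    (hball : ball (0 : Euc n) ε ⊆ B) (x : Euc n) :
    Continuous fun u : Euc n => gB B (x - u) := by
  have key : ∀ u u' : Euc n, gB B (x - u) - gB B (x - u') ≤ 2 * ‖u - u'‖ / ε := by
    intro u u'
    have h := gB_add_le hBconv hB0 hε hball (x - u') (u' - u)
    have h2 : x - u' + (u' - u) = x - u := by abel
    rw [h2] at h
    have h3 : gB B (u' - u) ≤ 2 * ‖u' - u‖ / ε := gB_le_norm hB0 hε hball _
    rw [norm_sub_rev] at h3
    linarith
  have hlip : LipschitzWith (Real.toNNReal (2 / ε)) (fun u => gB B (x - u)) := by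
    refine LipschitzWith.of_dist_le_mul fun u u' => ?_
    rw [Real.dist_eq, dist_eq_norm, Real.coe_toNNReal _ (by positivity : (0:ℝ) ≤ 2 / ε)]
    rw [abs_sub_le_iff]
    have c1 := key u u'
    have c2 := key u' u
    rw [norm_sub_rev] at c2
    constructor
    · calc gB B (x - u) - gB B (x - u') ≤ 2 * ‖u - u'‖ / ε := c1
        _ = 2 / ε * ‖u - u'‖ := by ring
    · calc gB B (x - u') - gB B (x - u) ≤ 2 * ‖u - u'‖ / ε := c2
        _ = 2 / ε * ‖u - u'‖ := by ring
  exact hlip.continuous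

lemma isCompact_convexJoin_singleton {K : Set (Euc n)} (hK : IsCompact K) (p : Euc n) :
    IsCompact (convexJoin ℝ K {p}) := by
  have heq : convexJoin ℝ K {p}
      = (fun q : Euc n × ℝ => (1 - q.2) • q.1 + q.2 • p) '' (K ×ˢ Icc (0:ℝ) 1) := by
    ext z
    simp only [mem_convexJoin, Set.mem_singleton_iff, Set.mem_image, Set.mem_prod]
    constructor
    · rintro ⟨a, ha, b, rfl, hz⟩
      rw [segment_eq_image ℝ a b] at hz
      obtain ⟨θ, hθ, rfl⟩ := hz
      exact ⟨(a, θ), ⟨ha, hθ⟩, rfl⟩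
    · rintro ⟨⟨a, θ⟩, ⟨ha, hθ⟩, rfl⟩
      refine ⟨a, ha, p, rfl, ?_⟩
      rw [segment_eq_image ℝ a p]
      exact ⟨θ, hθ, rfl⟩
  rw [heq]
  refine (hK.prod isCompact_Icc).image ?_
  exact ((continuous_const.sub continuous_snd).smul continuous_fst).add
    (continuous_snd.smul continuous_const)

lemma suppF_convexJoin {K : Set (Euc n)} (hK : IsCompact K) (hKne : K.Nonempty)
    (p s : Euc n) :
    suppF (convexJoin ℝ K {p}) s = max (suppF K s) (inner ℝ s p : ℝ) := by
  have hK'cp := isCompact_convexJoin_singleton hK p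
  apply le_antisymm
  · refine suppF_le (hKne.mono (subset_convexJoin_left (singleton_nonempty p))) ?_
    intro z hz
    rw [mem_convexJoin] at hz
    obtain ⟨a, ha, b, hb, hz⟩ := hz
    rw [Set.mem_singleton_iff] at hb
    rw [hb] at hz
    rw [segment_eq_image ℝ a p] at hz
    obtain ⟨θ, ⟨hθ0, hθ1⟩, rfl⟩ := hz
    have : (inner ℝ s ((1 - θ) • a + θ • p) : ℝ)
        = (1 - θ) * (inner ℝ s a : ℝ) + θ * (inner ℝ s p : ℝ) := by
      rw [inner_add_right, real_inner_smul_right, real_inner_smul_right]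
    rw [this]
    have ha' : (inner ℝ s a : ℝ) ≤ max (suppF K s) (inner ℝ s p : ℝ) :=
      (le_suppF hK ha s).trans (le_max_left _ _)
    have hp' : (inner ℝ s p : ℝ) ≤ max (suppF K s) (inner ℝ s p : ℝ) := le_max_right _ _
    nlinarith
  · apply max_le
    · exact suppF_le hKne fun a ha =>
        le_suppF hK'cp (subset_convexJoin_left (singleton_nonempty p) ha) s
    · exact le_suppF hK'cp
        (subset_convexJoin_right hKne (Set.mem_singleton p)) s



/-- every boundary point of a complete body is the endpoint of a
diametrical segment. -/
theorem complete_boundary_diametrical_segment {n : ℕ} (K C : Set (Euc n))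
    (hK : IsBody K) (hC : IsBody C) (hCint : (interior C).Nonempty)
    (hcomp : CompleteWrt K C) :
    ∀ x ∈ frontier K, ∃ y ∈ K, 2 * circumF (segment ℝ x y) C = diamF K C := by
  intro x hx
  obtain ⟨hKconv, hKcp, hKne⟩ := hK
  obtain ⟨hCconv, hCcp, hCne⟩ := hC
  rcases Nat.eq_zero_or_pos n with hn0 | hn
  · exfalso
    subst hn0
    obtain ⟨k0, hk0⟩ := hKne
    have hKuniv : K = Set.univ := Set.eq_univ_of_forall fun z => by
      rwa [Subsingleton.elim z k0]
    rw [hKuniv, frontier_univ] at hx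
    exact hx
  -- a nonzero vector
  set e : Euc n := EuclideanSpace.single ⟨0, hn⟩ (1:ℝ) with he_def
  have he : e ≠ 0 := by
    intro h
    have h2 := congrArg (fun f : Euc n => f ⟨0, hn⟩) h
    simp [he_def, EuclideanSpace.single_apply] at h2
  -- ball inside C - C
  obtain ⟨c0, hc0⟩ := hCint
  obtain ⟨ε, hε, hballc⟩ := Metric.isOpen_iff.mp isOpen_interior c0 hc0
  have hball : Metric.ball (0 : Euc n) ε ⊆ C - C := by
    intro z hz
    rw [mem_ball_zero_iff] at hz
    have hz2 : z + c0 ∈ C := by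
      apply interior_subset
      apply hballc
      rw [Metric.mem_ball, dist_eq_norm]
      simpa using hz
    refine ⟨z + c0, hz2, c0, interior_subset hc0, ?_⟩
    show z + c0 - c0 = z
    abel
  have hB0 : (0 : Euc n) ∈ C - C := zero_mem_sub hCne
  have hBconv : Convex ℝ (C - C) := hCconv.sub hCconv
  have hBcp : IsCompact (C - C) := isCompact_sub_set hCcp hCcp
  have hBsym : ∀ v ∈ C - C, -v ∈ C - C := by
    rintro _ ⟨a, ha, b, hb, rfl⟩
    refine ⟨b, hb, a, ha, ?_⟩
    show b - a = -(a - b)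
    abel
  -- maximizer y0 of u ↦ gB (C-C) (x - u) on K
  obtain ⟨y0, hy0K, hy0max⟩ := hKcp.exists_isMaxOn hKne
    (gB_continuous_shift hBconv hB0 hε hball x).continuousOn
  refine ⟨y0, hy0K, ?_⟩
  rw [circum_seg_eq hCconv x y0]
  have hxK : x ∈ K := by
    have h1 := frontier_subset_closure (s := K) hx
    rwa [hKcp.isClosed.closure_eq] at h1
  have hle : 2 * gB (C - C) (x - y0) ≤ diamF K C :=
    two_gauge_le_diamF hKcp hKne hCconv hCcp hCne hε hball he hxK hy0K
  by_contra hne2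
  have hlt : 2 * gB (C - C) (x - y0) < diamF K C := lt_of_le_of_ne hle hne2
  set M := gB (C - C) (x - y0) with hM_def
  set D := diamF K C with hD_def
  -- pick p outside K close to x
  have hxfr : x ∈ closure Kᶜ := by
    have h1 : x ∈ frontier Kᶜ := by rwa [frontier_compl]
    exact frontier_subset_closure h1
  have hDM : (0:ℝ) < D - 2 * M := by linarith
  set δ := (D - 2 * M) * ε / 8 with hδ_def
  have hδ0 : 0 < δ := by
    apply div_pos (mul_pos hDM hε) (by norm_num)
  obtain ⟨p, hpKc, hpd⟩ := Metric.mem_closure_iff.mp hxfr δ hδ0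
  have hpK : p ∉ K := hpKc
  -- K' = conv(K ∪ {p})
  have hK'cp := isCompact_convexJoin_singleton hKcp p
  have hK'conv : Convex ℝ (convexJoin ℝ K {p}) := hKconv.convexJoin (convex_singleton p)
  have hKsub : K ⊆ convexJoin ℝ K {p} := subset_convexJoin_left (Set.singleton_nonempty p)
  have hpK' : p ∈ convexJoin ℝ K {p} :=
    subset_convexJoin_right hKne (Set.mem_singleton p)
  have hK'ne : (convexJoin ℝ K {p}).Nonempty := ⟨p, hpK'⟩
  have hss : K ⊂ convexJoin ℝ K {p} := ⟨hKsub, fun h => hpK (h hpK')⟩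
  have hcompa := hcomp _ ⟨hK'conv, hK'cp, hK'ne⟩ hss
  rw [← hD_def] at hcompa
  -- gauge bounds
  have hgxp : gB (C - C) (x - p) ≤ 2 * δ / ε := by
    refine le_trans (gB_le_norm hB0 hε hball _) ?_
    have h1 : ‖x - p‖ ≤ δ := by
      rw [← dist_eq_norm]; exact hpd.le
    gcongr
  have hWle : M + 2 * δ / ε ≤ D / 2 := by
    have h1 : 2 * δ / ε = (D - 2 * M) / 4 := by
      rw [hδ_def]; field_simp; ring
    rw [h1]; linarith
  have hMu : ∀ u ∈ K, gB (C - C) (u - p) ≤ M + 2 * δ / ε := by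
    intro u hu
    have h1 := gB_add_le hBconv hB0 hε hball (u - x) (x - p)
    have h2 : u - x + (x - p) = u - p := by abel
    rw [h2] at h1
    have h3 : gB (C - C) (u - x) ≤ M := by
      have h4 := hy0max hu
      have h5 : gB (C - C) (-(x - u)) = gB (C - C) (x - u) := gB_neg hBsym (x - u)
      rw [neg_sub] at h5
      rw [h5]
      exact h4
    linarith
  -- suppF bound for K'
  have hD0 : (0:ℝ) ≤ D := diamF_nonneg hKcp hKne hCcp hCne hε hball he
  have hK'supp : ∀ s : Euc n, s ≠ 0 →
      suppF (convexJoin ℝ K {p} - convexJoin ℝ K {p}) s ≤ (D / 2) * suppF (C - C) s := by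
    intro s hs
    have hsB0 : 0 ≤ suppF (C - C) s := suppF_nonneg_of_zero_mem hBcp hB0 s
    rw [suppF_sub_eq hK'cp hK'cp hK'ne hK'ne s,
      suppF_convexJoin hKcp hKne p s, suppF_convexJoin hKcp hKne p (-s)]
    have hKK : suppF K s + suppF K (-s) ≤ (D / 2) * suppF (C - C) s := by
      have hbr : breadthF K C s ≤ D := breadth_le_diamF hKcp hKne hCcp hCne hε hball hs
      have hp2 := suppB_pos hCcp hε hball hs
      unfold breadthF at hbr
      rw [div_le_iff₀ hp2] at hbr
      have heq := suppF_sub_eq hKcp hKcp hKne hKne s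
      linarith
    have hWs : (M + 2 * δ / ε) * suppF (C - C) s ≤ (D / 2) * suppF (C - C) s :=
      mul_le_mul_of_nonneg_right hWle hsB0
    have h1 : suppF K s + (inner ℝ (-s) p : ℝ) ≤ (D / 2) * suppF (C - C) s := by
      have hb : ∀ u ∈ K, (inner ℝ s u : ℝ)
          ≤ (D / 2) * suppF (C - C) s - (inner ℝ (-s) p : ℝ) := by
        intro u hu
        have hg := gB_inner_le hBcp hB0 hε hball (u - p) s
        have hgb : gB (C - C) (u - p) * suppF (C - C) s
            ≤ (M + 2 * δ / ε) * suppF (C - C) s :=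
          mul_le_mul_of_nonneg_right (hMu u hu) hsB0
        have hinner : (inner ℝ s (u - p) : ℝ) = inner ℝ s u + (inner ℝ (-s) p : ℝ) := by
          rw [inner_sub_right, inner_neg_left]; ring
        rw [hinner] at hg
        linarith
      have := suppF_le hKne hb
      linarith
    have h2 : (inner ℝ s p : ℝ) + suppF K (-s) ≤ (D / 2) * suppF (C - C) s := by
      have hb : ∀ u ∈ K, (inner ℝ (-s) u : ℝ)
          ≤ (D / 2) * suppF (C - C) s - (inner ℝ s p : ℝ) := by
        intro u hu
        have hg := gB_inner_le hBcp hB0 hε hball (p - u) s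
        have hgpu : gB (C - C) (p - u) = gB (C - C) (u - p) := by
          have h5 := gB_neg hBsym (u - p)
          rw [neg_sub] at h5
          exact h5
        have hgb : gB (C - C) (p - u) * suppF (C - C) s
            ≤ (M + 2 * δ / ε) * suppF (C - C) s := by
          rw [hgpu]
          exact mul_le_mul_of_nonneg_right (hMu u hu) hsB0
        have hinner : (inner ℝ s (p - u) : ℝ) = inner ℝ s p + (inner ℝ (-s) u : ℝ) := by
          rw [inner_sub_right, inner_neg_left]; ring
        rw [hinner] at hg
        linarith
      have := suppF_le hKne hb
      linarith
    have h3 : (inner ℝ s p : ℝ) + (inner ℝ (-s) p : ℝ) ≤ (D / 2) * suppF (C - C) s := by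
      have hzero : (inner ℝ (-s) p : ℝ) = -(inner ℝ s p : ℝ) := by
        rw [inner_neg_left]
      rw [hzero]
      have : (0:ℝ) ≤ (D / 2) * suppF (C - C) s := mul_nonneg (by linarith) hsB0
      linarith
    rcases max_cases (suppF K s) ((inner ℝ s p : ℝ)) with ⟨hm, _⟩ | ⟨hm, _⟩ <;>
      rcases max_cases (suppF K (-s)) ((inner ℝ (-s) p : ℝ)) with ⟨hm', _⟩ | ⟨hm', _⟩ <;>
      rw [hm, hm'] <;> linarith
  have hdle : diamF (convexJoin ℝ K {p}) C ≤ D :=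
    diamF_le he fun s hs => breadthF_le_of_suppF_le hCcp hε hball hs (by
      have := hK'supp s hs
      linarith)
  linarith
end
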